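/- Let (X,ρ) be a hyperbolic space, C ⊆ X, c ∈ star(C), λ ∈ [0,1], and let A, B be nonempty closed bounded subsets of C. Then h((1-λ)A ⊕ λ{c}, (1-λ)B ⊕ λ{c}) ≤ (1-λ)·h(A,B), where (1-λ)E ⊕ λ{c} denotes the closure of {(1-λ)e ⊕ λc : e ∈ E} and h is the Pompeiu–Hausdorff metric. -/

import Mathlib

open Metric Set

/-- Let `X` be a hyperbolic space with convex-combination map
`W x y t = (1-t)x ⊕ t y` satisfying the metric-segment identities and the hyperbolic
inequality, let `C ⊆ X` be star-shaped with respect to `c`, `λ ∈ [0,1]`, and let `A, B` be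
nonempty, closed and bounded subsets of `C`.  Then, with
`(1-λ)E ⊕ λ{c} := closure {(1-λ)e ⊕ λc : e ∈ E}` and `h` the Pompeiu–Hausdorff metric,
`h((1-λ)A ⊕ λ{c}, (1-λ)B ⊕ λ{c}) ≤ (1-λ)·h(A,B)`. -/
theorem stmt19 {X : Type*} [MetricSpace X]
    (W : X → X → ℝ → X)
    (hW0 : ∀ x y : X, ∀ t ∈ Icc (0 : ℝ) 1, dist x (W x y t) = t * dist x y)
    (hW1 : ∀ x y : X, ∀ t ∈ Icc (0 : ℝ) 1, dist (W x y t) y = (1 - t) * dist x y)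
    (hWhyp : ∀ x y w z : X, ∀ t ∈ Icc (0 : ℝ) 1,
      dist (W x y t) (W w z t) ≤ (1 - t) * dist x w + t * dist y z)
    (C : Set X) (c : X) (hc : c ∈ C)
    (hstar : ∀ x ∈ C, ∀ t ∈ Icc (0 : ℝ) 1, W x c t ∈ C)
    (A B : Set X) (hAC : A ⊆ C) (hBC : B ⊆ C)
    (hAne : A.Nonempty) (hBne : B.Nonempty)
    (hAcl : IsClosed A) (hBcl : IsClosed B)
    (hAbd : Bornology.IsBounded A) (hBbd : Bornology.IsBounded B)
    (lam : ℝ) (hlam : lam ∈ Icc (0 : ℝ) 1) :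
    hausdorffDist (closure ((fun a => W a c lam) '' A))
        (closure ((fun b => W b c lam) '' B)) ≤
      (1 - lam) * hausdorffDist A B := by
  have hne : EMetric.hausdorffEdist A B ≠ ⊤ :=
    hausdorffEdist_ne_top_of_nonempty_of_bounded hAne hBne hAbd hBbd
  have hlam1 : 0 ≤ 1 - lam := by linarith [hlam.2]
  have hlip : ∀ a b : X, dist (W a c lam) (W b c lam) ≤ (1 - lam) * dist a b := by
    intro a b
    have := hWhyp a c b c lam hlam
    simpa using this
  have key : ∀ (S T : Set X), T.Nonempty → EMetric.hausdorffEdist S T ≠ ⊤ →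
      ∀ x ∈ (fun a => W a c lam) '' S,
        infDist x ((fun b => W b c lam) '' T) ≤ (1 - lam) * hausdorffDist S T := by
    rintro S T hTne hST x ⟨a, haS, rfl⟩
    have h1 : infDist (W a c lam) ((fun b => W b c lam) '' T) ≤ (1 - lam) * infDist a T := by
      refine le_of_forall_pos_le_add fun ε hε => ?_
      obtain ⟨b, hbT, hb⟩ := (infDist_lt_iff hTne).mp
        (lt_add_of_pos_right (infDist a T) hε)
      calc infDist (W a c lam) ((fun b => W b c lam) '' T)
          ≤ dist (W a c lam) (W b c lam) :=
            infDist_le_dist_of_mem ⟨b, hbT, rfl⟩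
        _ ≤ (1 - lam) * dist a b := hlip a b
        _ ≤ (1 - lam) * (infDist a T + ε) := by
            exact mul_le_mul_of_nonneg_left hb.le hlam1
        _ ≤ (1 - lam) * infDist a T + ε := by nlinarith [hlam.1]
    calc infDist (W a c lam) ((fun b => W b c lam) '' T)
        ≤ (1 - lam) * infDist a T := h1
      _ ≤ (1 - lam) * hausdorffDist S T := by
          exact mul_le_mul_of_nonneg_left (infDist_le_hausdorffDist_of_mem haS hST) hlam1
  rw [hausdorffDist_closure]
  refine hausdorffDist_le_of_infDist ?_ (key A B hBne hne) ?_
  · exact mul_nonneg hlam1 hausdorffDist_nonneg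
  · have := key B A hAne (hausdorffEdist_ne_top_of_nonempty_of_bounded hBne hAne hBbd hAbd)
    simpa [hausdorffDist_comm] using this
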